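/- arXiv:2301.01001 — 4 statements merged into one kernel-verified Lean document; each statement's English description precedes it below -/
import Mathlib

section
/- Let b > 0 be a real constant and let Q : ℝ → ℝ be twice differentiable on the open interval (-b, b). If Q satisfies the linear ODE (b² - s²)·Q''(s) - s·Q'(s) + Q(s) = 0 for every s ∈ (-b, b), then there exist real constants k₁ and k₂ such that Q(s) = k₁·s + k₂·√(b² - s²) for all s ∈ (-b, b). -/
/-- The ODE `(b² - s²)·Q'' - s·Q' + Q = 0` on `(-b, b)` forces
`Q(s) = k₁·s + k₂·√(b² - s²)`. -/
theorem stmt_0 (b : ℝ) (hb : 0 < b) (Q : ℝ → ℝ)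
    (hQ1 : ∀ s ∈ Set.Ioo (-b) b, DifferentiableAt ℝ Q s)
    (hQ2 : ∀ s ∈ Set.Ioo (-b) b, DifferentiableAt ℝ (deriv Q) s)
    (hODE : ∀ s ∈ Set.Ioo (-b) b,
      (b ^ 2 - s ^ 2) * deriv (deriv Q) s - s * deriv Q s + Q s = 0) :
    ∃ k₁ k₂ : ℝ, ∀ s ∈ Set.Ioo (-b) b,
      Q s = k₁ * s + k₂ * Real.sqrt (b ^ 2 - s ^ 2) := by
  set v : ℝ → ℝ := fun x => Real.sqrt (b ^ 2 - x ^ 2) with hvdef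
  set g₁ : ℝ → ℝ := fun x => (x * Q x + (b ^ 2 - x ^ 2) * deriv Q x) / b ^ 2 with hg1def
  set g₂ : ℝ → ℝ := fun x => (Q x - x * deriv Q x) * v x / b ^ 2 with hg2def
  have hpos : ∀ s ∈ Set.Ioo (-b) b, 0 < b ^ 2 - s ^ 2 := by
    rintro s ⟨h1, h2⟩; nlinarith
  have hvpos : ∀ s ∈ Set.Ioo (-b) b, 0 < v s := fun s hs => Real.sqrt_pos.mpr (hpos s hs)
  have hvsq : ∀ s ∈ Set.Ioo (-b) b, v s ^ 2 = b ^ 2 - s ^ 2 := fun s hs =>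
    Real.sq_sqrt (hpos s hs).le
  have hvder : ∀ s ∈ Set.Ioo (-b) b, HasDerivAt v (-s / v s) s := by
    intro s hs
    have hinner : HasDerivAt (fun x : ℝ => b ^ 2 - x ^ 2) (-(2 * s)) s := by
      simpa using (hasDerivAt_pow 2 s).const_sub (b ^ 2)
    have := (Real.hasDerivAt_sqrt (hpos s hs).ne').comp s hinner
    refine this.congr_deriv ?_; symm
    field_simp
    ring
  have hg1der : ∀ s ∈ Set.Ioo (-b) b, HasDerivAt g₁ 0 s := by
    intro s hs
    have hu := (hQ1 s hs).hasDerivAt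
    have hu' := (hQ2 s hs).hasDerivAt
    have hinner : HasDerivAt (fun x : ℝ => b ^ 2 - x ^ 2) (-(2 * s)) s := by
      simpa using (hasDerivAt_pow 2 s).const_sub (b ^ 2)
    have h := (((hasDerivAt_id s).mul hu).add (hinner.mul hu')).div_const (b ^ 2)
    refine h.congr_deriv ?_; symm
    have := hODE s hs
    simp only [id_eq, Pi.sub_apply, Pi.mul_apply]
    field_simp
    linarith
  have hg2der : ∀ s ∈ Set.Ioo (-b) b, HasDerivAt g₂ 0 s := by
    intro s hs
    have hu := (hQ1 s hs).hasDerivAt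
    have hu' := (hQ2 s hs).hasDerivAt
    have h := (((hu.sub ((hasDerivAt_id s).mul hu')).mul (hvder s hs)).div_const (b ^ 2))
    refine h.congr_deriv ?_; symm
    have hODEs := hODE s hs
    have hv2 := hvsq s hs
    have hvne := (hvpos s hs).ne'
    simp only [id_eq, Pi.sub_apply, Pi.mul_apply]
    field_simp
    linear_combination s * hODEs + s * deriv (deriv Q) s * hv2
  have hdiff1 : DifferentiableOn ℝ g₁ (Set.Ioo (-b) b) := fun s hs =>
    ((hg1der s hs).differentiableAt).differentiableWithinAt
  have hdiff2 : DifferentiableOn ℝ g₂ (Set.Ioo (-b) b) := fun s hs =>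
    ((hg2der s hs).differentiableAt).differentiableWithinAt
  have hfd1 : ∀ s ∈ Set.Ioo (-b) b, fderivWithin ℝ g₁ (Set.Ioo (-b) b) s = 0 := by
    intro s hs
    rw [fderivWithin_of_isOpen isOpen_Ioo hs, (hg1der s hs).hasFDerivAt.fderiv]
    ext; simp
  have hfd2 : ∀ s ∈ Set.Ioo (-b) b, fderivWithin ℝ g₂ (Set.Ioo (-b) b) s = 0 := by
    intro s hs
    rw [fderivWithin_of_isOpen isOpen_Ioo hs, (hg2der s hs).hasFDerivAt.fderiv]
    ext; simp
  have h0 : (0 : ℝ) ∈ Set.Ioo (-b) b := by constructor <;> linarith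
  refine ⟨g₁ 0, g₂ 0, fun s hs => ?_⟩
  have hc1 : g₁ s = g₁ 0 :=
    (convex_Ioo (-b) b).is_const_of_fderivWithin_eq_zero hdiff1 hfd1 hs h0
  have hc2 : g₂ s = g₂ 0 :=
    (convex_Ioo (-b) b).is_const_of_fderivWithin_eq_zero hdiff2 hfd2 hs h0
  rw [← hc1, ← hc2]
  have hv2 := hvsq s hs
  have hvne := (hvpos s hs).ne'
  show Q s = g₁ s * s + g₂ s * v s
  rw [hg1def, hg2def]
  field_simp
  linear_combination (-(Q s - s * deriv Q s)) * hv2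
end

section
/- Let b > 0, let k₁, k₂ be real constants, let c > 0, and suppose that D(s) := 1 + k₁·s² + k₂·s·√(b² - s²) > 0 for all s ∈ (-b, b). Define φ(s) = c·exp( ∫₀ˢ (k₁·t + k₂·√(b² - t²)) / D(t) dt ) for s ∈ (-b, b). Then φ is differentiable and positive on (-b, b), and for every s ∈ (-b, b): φ(s) - s·φ'(s) = φ(s)/D(s) > 0 and φ'(s)/(φ(s) - s·φ'(s)) = k₁·s + k₂·√(b² - s²). -/
/-- the explicit unicorn-type function
`φ(s) = c·exp(∫₀ˢ (k₁t + k₂√(b²-t²))/D(t) dt)` is differentiable and positive on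
`(-b, b)`, satisfies `φ - sφ' = φ/D > 0` and `φ'/(φ - sφ') = k₁s + k₂√(b²-s²)`. -/
theorem stmt_3 (b : ℝ) (hb : 0 < b) (k₁ k₂ c : ℝ) (hc : 0 < c)
    (D : ℝ → ℝ)
    (hDdef : D = fun s => 1 + k₁ * s ^ 2 + k₂ * s * Real.sqrt (b ^ 2 - s ^ 2))
    (hD : ∀ s ∈ Set.Ioo (-b) b, 0 < D s)
    (φ : ℝ → ℝ)
    (hφdef : φ = fun s => c * Real.exp (∫ t in (0:ℝ)..s,
        (k₁ * t + k₂ * Real.sqrt (b ^ 2 - t ^ 2)) / D t)) :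
    ∀ s ∈ Set.Ioo (-b) b,
      DifferentiableAt ℝ φ s ∧ 0 < φ s ∧
      φ s - s * deriv φ s = φ s / D s ∧ 0 < φ s / D s ∧
      deriv φ s / (φ s - s * deriv φ s)
        = k₁ * s + k₂ * Real.sqrt (b ^ 2 - s ^ 2) := by
  intro s hs
  set g : ℝ → ℝ := fun t => (k₁ * t + k₂ * Real.sqrt (b ^ 2 - t ^ 2)) / D t with hg
  have hDs := hD s hs
  have h0mem : (0:ℝ) ∈ Set.Ioo (-b) b := ⟨by linarith, hb⟩
  have hcont : ContinuousOn g (Set.Ioo (-b) b) := by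
    apply ContinuousOn.div
    · fun_prop
    · rw [hDdef]; fun_prop
    · intro t ht; exact (hD t ht).ne'
  have hsub : Set.uIcc (0:ℝ) s ⊆ Set.Ioo (-b) b :=
    Set.ordConnected_Ioo.uIcc_subset h0mem hs
  have hint : IntervalIntegrable g MeasureTheory.volume 0 s :=
    (hcont.mono hsub).intervalIntegrable
  have hmeas : StronglyMeasurableAtFilter g (nhds s) :=
    hcont.stronglyMeasurableAtFilter isOpen_Ioo s hs
  have hca : ContinuousAt g s := hcont.continuousAt (isOpen_Ioo.mem_nhds hs)
  have hI : HasDerivAt (fun x => ∫ t in (0:ℝ)..x, g t) (g s) s :=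
    intervalIntegral.integral_hasDerivAt_right hint hmeas hca
  have hφd : HasDerivAt φ (φ s * g s) s := by
    have := (hI.exp).const_mul c
    rw [hφdef]
    refine this.congr_deriv ?_
    beta_reduce; ring
  have hφpos : 0 < φ s := by
    rw [hφdef]; positivity
  have hderiv : deriv φ s = φ s * g s := hφd.deriv
  have hA : s * (k₁ * s + k₂ * Real.sqrt (b ^ 2 - s ^ 2)) = D s - 1 := by
    rw [hDdef]; ring
  refine ⟨hφd.differentiableAt, hφpos, ?_, by positivity, ?_⟩
  · rw [hderiv, hg]
    field_simp
    nlinarith [hA]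
  · rw [hderiv, hg]
    have h1 : φ s - s * (φ s * ((k₁ * s + k₂ * Real.sqrt (b ^ 2 - s ^ 2)) / D s))
        = φ s / D s := by
      field_simp
      nlinarith [hA]
    rw [h1]
    field_simp
end

section
/- Let E be a real inner product space, let b ∈ E be a fixed vector, and for y ∈ E, y ≠ 0, set α(y) = ‖y‖, β(y) = ⟪b, y⟫ and s(y) = β(y)/α(y). Then for every y ≠ 0, s is twice Fréchet differentiable at y and its second derivative at y, evaluated at the pair (b, b), equals -3·s(y)·(‖b‖² - s(y)²)/‖y‖². -/
open scoped RealInnerProductSpace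

section Aux
variable {E : Type*} [NormedAddCommGroup E] [InnerProductSpace ℝ E]

lemma aux_hasFDerivAt_norm (y : E) (hy : y ≠ 0) :
    HasFDerivAt (fun y : E => ‖y‖) ((‖y‖)⁻¹ • innerSL ℝ y) y := by
  have hsq : HasFDerivAt (fun x : E => ‖x‖ ^ 2) (2 • (innerSL ℝ y)) y :=
    (hasStrictFDerivAt_norm_sq y).hasFDerivAt
  have hne : ‖y‖ ^ 2 ≠ 0 := pow_ne_zero _ (norm_ne_zero_iff.2 hy)
  have h := (Real.hasDerivAt_sqrt hne).comp_hasFDerivAt y hsq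
  have heq : (fun x : E => Real.sqrt (‖x‖ ^ 2)) = fun x : E => ‖x‖ := by
    funext x; exact Real.sqrt_sq (norm_nonneg x)
  rw [show ((fun x => Real.sqrt x) ∘ fun x : E => ‖x‖ ^ 2) = fun x : E => ‖x‖ from heq] at h
  refine h.congr_fderiv ?_
  symm
  rw [Real.sqrt_sq (norm_nonneg y)]
  ext z
  simp [smul_smul]
  field_simp

noncomputable def gfun (b y : E) : E →L[ℝ] ℝ :=
  (‖y‖)⁻¹ • innerSL ℝ b + (-(⟪b, y⟫ * (‖y‖ ^ 3)⁻¹)) • innerSL ℝ y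

lemma aux_hasFDerivAt_s (b y : E) (hy : y ≠ 0) :
    HasFDerivAt (fun z : E => ⟪b, z⟫ / ‖z‖) (gfun b y) y := by
  have hn := aux_hasFDerivAt_norm y hy
  have hne : ‖y‖ ≠ 0 := norm_ne_zero_iff.2 hy
  have hb : HasFDerivAt (fun z : E => ⟪b, z⟫) (innerSL ℝ b) y :=
    (innerSL ℝ b).hasFDerivAt
  have hinv : HasFDerivAt (fun z : E => ‖z‖⁻¹) ((-(‖y‖ ^ 2)⁻¹) • ((‖y‖)⁻¹ • innerSL ℝ y)) y :=
    (hasDerivAt_inv hne).comp_hasFDerivAt y hn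
  have h := hb.mul hinv
  simp only [div_eq_mul_inv]
  refine h.congr_fderiv ?_
  symm
  ext z
  simp [gfun, smul_smul]
  field_simp
  ring

lemma aux_diff_gfun (b y : E) (hy : y ≠ 0) :
    DifferentiableAt ℝ (fun z : E => gfun b z) y := by
  have hne : ‖y‖ ≠ 0 := norm_ne_zero_iff.2 hy
  have hn : DifferentiableAt ℝ (fun z : E => ‖z‖) y :=
    (aux_hasFDerivAt_norm y hy).differentiableAt
  have hb : DifferentiableAt ℝ (fun z : E => ⟪b, z⟫) y :=
    (innerSL ℝ b).differentiableAt
  have hY : DifferentiableAt ℝ (fun z : E => innerSL ℝ z) y := by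
    exact (innerSL ℝ (E := E)).differentiableAt
  have h3 : DifferentiableAt ℝ (fun z : E => ‖z‖ ^ 3) y := hn.pow 3
  have hq : DifferentiableAt ℝ (fun z : E => ⟪b, z⟫ * (‖z‖ ^ 3)⁻¹) y :=
    hb.mul (h3.inv (pow_ne_zero 3 hne))
  exact ((hn.inv hne).smul (differentiableAt_const (innerSL ℝ b))).add (hq.neg.smul hY)
end Aux

/-- for `s(y) = ⟪b, y⟫/‖y‖`, at every `y ≠ 0` the function `s` is twice
Fréchet differentiable and its second derivative evaluated at `(b, b)` equals
`-3·s(y)·(‖b‖² - s(y)²)/‖y‖²`. -/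
theorem stmt_8 {E : Type*} [NormedAddCommGroup E] [InnerProductSpace ℝ E]
    (b : E) (s : E → ℝ) (hs : s = fun y => ⟪b, y⟫ / ‖y‖) :
    ∀ y : E, y ≠ 0 →
      DifferentiableAt ℝ s y ∧ DifferentiableAt ℝ (fderiv ℝ s) y ∧
      fderiv ℝ (fderiv ℝ s) y b b
        = -3 * s y * (‖b‖ ^ 2 - (s y) ^ 2) / ‖y‖ ^ 2 := by
  subst hs
  intro y hy
  have hne : ‖y‖ ≠ 0 := norm_ne_zero_iff.2 hy
  have hev : fderiv ℝ (fun z : E => ⟪b, z⟫ / ‖z‖) =ᶠ[nhds y] gfun b := by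
    filter_upwards [eventually_ne_nhds hy] with z hz
    exact (aux_hasFDerivAt_s b z hz).fderiv
  have hdiffg := aux_diff_gfun b y hy
  refine ⟨(aux_hasFDerivAt_s b y hy).differentiableAt,
    hdiffg.congr_of_eventuallyEq hev, ?_⟩
  -- reduce to scalar function via evaluation map
  set L : (E →L[ℝ] ℝ) →L[ℝ] ℝ := ContinuousLinearMap.apply ℝ ℝ b with hL
  have hcomp : fderiv ℝ (fun z : E => gfun b z b) y = L.comp (fderiv ℝ (gfun b) y) := by
    have := (L.hasFDerivAt.comp y hdiffg.hasFDerivAt).fderiv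
    simpa [hL, Function.comp_def] using this
  have hval : fderiv ℝ (fderiv ℝ (fun z : E => ⟪b, z⟫ / ‖z‖)) y b b
      = fderiv ℝ (fun z : E => gfun b z b) y b := by
    rw [hev.fderiv_eq, hcomp]; rfl
  rw [hval]
  -- explicit scalar function
  have hfun : (fun z : E => gfun b z b)
      = fun z : E => ‖z‖⁻¹ * ⟪b, b⟫ + -(⟪b, z⟫ * (‖z‖ ^ 3)⁻¹ * ⟪z, b⟫) := by
    funext z; simp [gfun]
  have hn := aux_hasFDerivAt_norm y hy
  have hb : HasFDerivAt (fun z : E => ⟪b, z⟫) (innerSL ℝ b) y := (innerSL ℝ b).hasFDerivAt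
  have hyb : HasFDerivAt (fun z : E => ⟪z, b⟫) (innerSL ℝ b) y := by
    simpa [real_inner_comm] using hb
  have hinv : HasFDerivAt (fun z : E => ‖z‖⁻¹)
      ((-(‖y‖ ^ 2)⁻¹) • ((‖y‖)⁻¹ • innerSL ℝ y)) y :=
    (hasDerivAt_inv hne).comp_hasFDerivAt y hn
  have hp3 : HasFDerivAt (fun z : E => ‖z‖ ^ 3)
      (((3 : ℝ) * ‖y‖ ^ 2) • ((‖y‖)⁻¹ • innerSL ℝ y)) y := by
    have := (hasDerivAt_pow 3 ‖y‖).comp_hasFDerivAt y hn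
    exact this.congr_fderiv (by norm_num)
  have hinv3 : HasFDerivAt (fun z : E => (‖z‖ ^ 3)⁻¹)
      ((-((‖y‖ ^ 3) ^ 2)⁻¹) • (((3 : ℝ) * ‖y‖ ^ 2) • ((‖y‖)⁻¹ • innerSL ℝ y))) y :=
    (hasDerivAt_inv (pow_ne_zero 3 hne)).comp_hasFDerivAt y hp3
  have hphi := (hinv.mul_const ⟪b, b⟫).add (((hb.mul hinv3).mul hyb).neg)
  have hphi' : HasFDerivAt
      (fun z : E => ‖z‖⁻¹ * ⟪b, b⟫ + -(⟪b, z⟫ * (‖z‖ ^ 3)⁻¹ * ⟪z, b⟫)) _ y := hphi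
  rw [hfun, hphi'.fderiv]
  have hbb : ⟪b, b⟫ = ‖b‖ ^ 2 := real_inner_self_eq_norm_sq b
  have hyb' : ⟪y, b⟫ = ⟪b, y⟫ := real_inner_comm b y
  simp only [ContinuousLinearMap.add_apply, ContinuousLinearMap.smul_apply,
    ContinuousLinearMap.neg_apply, innerSL_apply_apply, Pi.mul_apply, smul_eq_mul, hbb, hyb']
  field_simp
  ring
end

section
/- Let E be a real inner product space, let b ∈ E be a fixed vector, and for y ∈ E, y ≠ 0, set α(y) = ‖y‖, β(y) = ⟪b, y⟫ and s(y) = β(y)/α(y). Let Q : ℝ → ℝ be twice differentiable. Then for every y ≠ 0, the composite function y ↦ Q(s(y)) is twice Fréchet differentiable at y, its first derivative at y in the direction b equals (‖b‖² - s(y)²)·Q'(s(y))/‖y‖, and its second derivative at y evaluated at (b, b) equals (‖b‖² - s(y)²)·[ (‖b‖² - s(y)²)·Q''(s(y)) - 3·s(y)·Q'(s(y)) ]/‖y‖². -/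
open scoped RealInnerProductSpace

theorem hasFDerivAt_norm'' {E : Type*} [NormedAddCommGroup E] [InnerProductSpace ℝ E]
    {x : E} (hx : x ≠ 0) :
    HasFDerivAt (fun z : E => ‖z‖) (‖x‖⁻¹ • innerSL ℝ x) x := by
  have hn : ‖x‖ ≠ 0 := norm_ne_zero_iff.mpr hx
  have h1 := ((hasStrictFDerivAt_norm_sq x).hasFDerivAt).sqrt (by positivity)
  have h2 : (fun z : E => Real.sqrt (‖z‖ ^ 2)) = fun z : E => ‖z‖ := by
    funext z; exact Real.sqrt_sq (norm_nonneg z)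
  rw [h2] at h1
  convert h1 using 1
  rw [Real.sqrt_sq (norm_nonneg x)]
  ext v
  simp only [ContinuousLinearMap.smul_apply, ContinuousLinearMap.coe_smul',
    Pi.smul_apply, smul_eq_mul]
  field_simp
  ring

noncomputable def gmap {E : Type*} [NormedAddCommGroup E] [InnerProductSpace ℝ E]
    (b x : E) : E →L[ℝ] ℝ :=
  ‖x‖⁻¹ • innerSL ℝ b - (⟪b, x⟫ / ‖x‖ ^ 3) • innerSL ℝ x

theorem hasFDerivAt_s' {E : Type*} [NormedAddCommGroup E] [InnerProductSpace ℝ E]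
    (b : E) {x : E} (hx : x ≠ 0) :
    HasFDerivAt (fun z : E => ⟪b, z⟫ / ‖z‖) (gmap b x) x := by
  have hn : ‖x‖ ≠ 0 := norm_ne_zero_iff.mpr hx
  have hb : HasFDerivAt (fun z : E => ⟪b, z⟫) (innerSL ℝ b) x :=
    (innerSL ℝ b).hasFDerivAt
  have hinv : HasFDerivAt (fun z : E => ‖z‖⁻¹) ((-(‖x‖ ^ 2)⁻¹) • (‖x‖⁻¹ • innerSL ℝ x)) x :=
    (hasDerivAt_inv hn).comp_hasFDerivAt x (hasFDerivAt_norm'' hx)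
  have h : HasFDerivAt (fun z : E => ⟪b, z⟫ * ‖z‖⁻¹) _ x := hb.mul hinv
  simp only [div_eq_mul_inv]
  refine h.congr_fderiv ?_
  ext v
  simp only [gmap, ContinuousLinearMap.sub_apply, ContinuousLinearMap.smul_apply,
    innerSL_apply_apply, smul_eq_mul, ContinuousLinearMap.coe_smul', Pi.smul_apply,
    ContinuousLinearMap.coe_sub', Pi.sub_apply, ContinuousLinearMap.add_apply]
  field_simp
  ring

/-- for `s(y) = ⟪b, y⟫/‖y‖` and a twice differentiable `Q : ℝ → ℝ`,
the composite `y ↦ Q(s(y))` is twice Fréchet differentiable at every `y ≠ 0`, with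
`Θ₁ = (‖b‖² - s²)·Q'(s)/‖y‖` and
`Θ₂ = (‖b‖² - s²)·[(‖b‖² - s²)·Q''(s) - 3·s·Q'(s)]/‖y‖²`
(equations (3.a3x) and (3.005x) of the paper). -/
theorem stmt_9 {E : Type*} [NormedAddCommGroup E] [InnerProductSpace ℝ E]
    (b : E) (s : E → ℝ) (hs : s = fun y => ⟪b, y⟫ / ‖y‖)
    (Q : ℝ → ℝ) (hQ1 : Differentiable ℝ Q) (hQ2 : Differentiable ℝ (deriv Q)) :
    ∀ y : E, y ≠ 0 →
      DifferentiableAt ℝ (fun z => Q (s z)) y ∧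
      DifferentiableAt ℝ (fderiv ℝ (fun z => Q (s z))) y ∧
      fderiv ℝ (fun z => Q (s z)) y b
        = (‖b‖ ^ 2 - (s y) ^ 2) * deriv Q (s y) / ‖y‖ ∧
      fderiv ℝ (fderiv ℝ (fun z => Q (s z))) y b b
        = (‖b‖ ^ 2 - (s y) ^ 2) *
            ((‖b‖ ^ 2 - (s y) ^ 2) * deriv (deriv Q) (s y)
              - 3 * s y * deriv Q (s y)) / ‖y‖ ^ 2 := by
  subst hs
  intro y hy
  have hα : ‖y‖ ≠ 0 := norm_ne_zero_iff.mpr hy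
  set u : E → ℝ := fun z => ⟪b, z⟫ / ‖z‖ with hu
  set F : E → (E →L[ℝ] ℝ) := fun z => deriv Q (u z) • gmap b z with hF
  -- the composite has derivative F x at every x ≠ 0
  have hQs : ∀ x : E, x ≠ 0 → HasFDerivAt (fun z => Q (u z)) (F x) x := by
    intro x hx
    exact ((hQ1 (u x)).hasDerivAt).comp_hasFDerivAt x (hasFDerivAt_s' b hx)
  have C1 : DifferentiableAt ℝ (fun z => Q (u z)) y := (hQs y hy).differentiableAt
  -- eventual equality of the derivative with F
  have hEq : fderiv ℝ (fun z => Q (u z)) =ᶠ[nhds y] F := by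
    filter_upwards [isOpen_compl_singleton.mem_nhds hy] with z hz
    exact (hQs z hz).fderiv
  -- differentiability of F at y
  have dnorm : DifferentiableAt ℝ (fun z : E => ‖z‖) y :=
    (hasFDerivAt_norm'' hy).differentiableAt
  have dinner : DifferentiableAt ℝ (fun z : E => ⟪b, z⟫) y :=
    (differentiableAt_const b).inner ℝ differentiableAt_id
  have du : DifferentiableAt ℝ u y := (hasFDerivAt_s' b hy).differentiableAt
  have dg : DifferentiableAt ℝ (fun z : E => gmap b z) y := by
    simp only [gmap, div_eq_mul_inv]
    have ddiv : DifferentiableAt ℝ (fun z : E => ⟪b, z⟫ * (‖z‖ ^ 3)⁻¹) y :=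
      dinner.mul ((dnorm.pow 3).inv (pow_ne_zero 3 hα))
    exact ((dnorm.inv hα).smul_const (innerSL ℝ b)).sub
      (ddiv.smul (innerSL ℝ (E := E)).differentiableAt)
  have dQ2 : DifferentiableAt ℝ (fun z : E => deriv Q (u z)) y := (hQ2 (u y)).comp y du
  have dF : DifferentiableAt ℝ F y := dQ2.smul dg
  have C2 : DifferentiableAt ℝ (fderiv ℝ (fun z => Q (u z))) y :=
    dF.congr_of_eventuallyEq hEq
  refine ⟨C1, C2, ?_, ?_⟩
  · rw [(hQs y hy).fderiv]
    simp only [hF, gmap, ContinuousLinearMap.smul_apply, ContinuousLinearMap.sub_apply,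
      innerSL_apply_apply, smul_eq_mul]
    rw [real_inner_self_eq_norm_sq, real_inner_comm y b]
    simp only [hu]
    field_simp
    rw [real_inner_comm y b]
  · -- second derivative
    rw [hEq.fderiv_eq]
    have h5 : fderiv ℝ (fun z => F z b) y = (fderiv ℝ F y).flip b := by
      rw [fderiv_clm_apply dF (differentiableAt_const b)]
      simp
    have hbb : fderiv ℝ F y b b = fderiv ℝ (fun z => F z b) y b := by
      rw [h5]; rfl
    rw [hbb]
    -- replace z ↦ F z b by a scalar closed form h
    set h : E → ℝ := fun z => deriv Q (u z) * ((‖b‖ ^ 2 - u z * u z) * ‖z‖⁻¹) with hh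
    have hEq2 : (fun z => F z b) =ᶠ[nhds y] h := by
      filter_upwards [isOpen_compl_singleton.mem_nhds hy] with z hz
      have hnz : ‖z‖ ≠ 0 := norm_ne_zero_iff.mpr hz
      simp only [hF, hh, gmap, ContinuousLinearMap.smul_apply, ContinuousLinearMap.sub_apply,
        innerSL_apply_apply, smul_eq_mul, hu]
      rw [real_inner_self_eq_norm_sq, real_inner_comm z b]
      field_simp
    rw [hEq2.fderiv_eq]
    -- compute the derivative of h at y
    have hud : HasFDerivAt u (gmap b y) y := hasFDerivAt_s' b hy
    have h1 : HasFDerivAt (fun z : E => deriv Q (u z))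
        ((deriv (deriv Q) (u y)) • gmap b y) y :=
      ((hQ2 (u y)).hasDerivAt).comp_hasFDerivAt y hud
    have hinv : HasFDerivAt (fun z : E => ‖z‖⁻¹)
        ((-(‖y‖ ^ 2)⁻¹) • (‖y‖⁻¹ • innerSL ℝ y)) y :=
      (hasDerivAt_inv hα).comp_hasFDerivAt y (hasFDerivAt_norm'' hy)
    have hsub := (hud.mul hud).const_sub (‖b‖ ^ 2)
    have hhd := h1.mul (hsub.mul hinv)
    rw [(show HasFDerivAt h _ y from hhd).fderiv]
    simp only [gmap, ContinuousLinearMap.add_apply, ContinuousLinearMap.smul_apply,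
      ContinuousLinearMap.sub_apply, ContinuousLinearMap.neg_apply, innerSL_apply_apply,
      smul_eq_mul, hu, Pi.mul_apply]
    rw [real_inner_self_eq_norm_sq, real_inner_comm y b]
    field_simp
    ring
end
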